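/- Let {λ_n} be a nested sequence of Young diagrams with |λ_n| = n, and suppose λ_N has at least k+1 rows for some N. Then for all i ≤ k and n ≥ N, the set of degree-i monomials in the Garsia-Procesi basis B(λ_n) equals the set of degree-i monomials in B(col_n), namely all monomials x_2^{a_2} ⋯ x_n^{a_n} of total degree i with 0 ≤ a_j ≤ j−1. In particular the number of degree-i monomials in B(λ_n) equals the number of permutations of {1,...,n} with exactly i inversions. -/

import Mathlib

open MvPolynomial

/-- Delete the rightmost box of (0-indexed) row `i` of `l`, drop empty rows, and re-sort
into weakly decreasing order. -/
def gpStep (l : List ℕ) (i : ℕ) : List ℕ :=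
  ((l.set i (l.getD i 0 - 1)).filter (fun x => x ≠ 0)).insertionSort (· ≥ ·)

/-- Auxiliary recursion for the Garsia-Procesi basis, with fuel equal to the number of boxes. -/
noncomputable def gpAux : ℕ → List ℕ → Set (MvPolynomial ℕ ℚ)
  | 0, _ => {1}
  | (n + 1), l => ⋃ i ∈ Finset.range l.length,
      (fun p => (X (n + 1) : MvPolynomial ℕ ℚ) ^ i * p) '' gpAux n (gpStep l i)

/-- The Garsia-Procesi basis `B(λ)`: `B((1)) = {1}` and
`B(λ) = ⋃_{i=1}^k x_n^{i-1} B(λ_i)` where `λ_i` is `λ` with the rightmost box of row `i`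
removed and rows re-sorted. -/
noncomputable def gpBasis (l : List ℕ) : Set (MvPolynomial ℕ ℚ) := gpAux l.sum l

/-- `l` is a partition of `n`: weakly decreasing, positive parts, total `n`. -/
def IsPartitionOf (n : ℕ) (l : List ℕ) : Prop :=
  l.Pairwise (· ≥ ·) ∧ (∀ x ∈ l, 0 < x) ∧ l.sum = n

-- helper: sum of set
lemma sum_set_add (l : List ℕ) (i v : ℕ) (h : i < l.length) :
    (l.set i v).sum + l.getD i 0 = l.sum + v := by
  induction l generalizing i with
  | nil => simp at h
  | cons x xs ih =>
    cases i with
    | zero => simp [List.set]; ring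
    | succ i =>
      simp only [List.set, List.sum_cons, List.getD_cons_succ]
      have := ih i (by simpa using h)
      omega

lemma sum_filter_ne_zero (l : List ℕ) : (l.filter (fun x => x ≠ 0)).sum = l.sum := by
  induction l with
  | nil => rfl
  | cons x xs ih =>
    rw [List.filter_cons]
    simp only [ne_eq, decide_not] at ih
    by_cases hx : x = 0
    · simp [hx, ih]
    · simp [hx, ih]

lemma sum_insertionSort (l : List ℕ) : (l.insertionSort (· ≥ ·)).sum = l.sum :=
  (List.perm_insertionSort _ l).sum_eq

lemma gpStep_sum (l : List ℕ) (i : ℕ) (h : i < l.length) (hpos : ∀ x ∈ l, 0 < x) :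
    (gpStep l i).sum + 1 = l.sum := by
  have h1 : 0 < l.getD i 0 := by rw [List.getD_eq_getElem l 0 h]; exact hpos _ (l.getElem_mem h)
  have := sum_set_add l i (l.getD i 0 - 1) h
  unfold gpStep
  rw [sum_insertionSort, sum_filter_ne_zero]
  omega

lemma gpStep_pos (l : List ℕ) (i : ℕ) : ∀ x ∈ gpStep l i, 0 < x := by
  intro x hx
  unfold gpStep at hx
  have := (List.perm_insertionSort (· ≥ ·) _).mem_iff.mp hx
  have h2 := List.of_mem_filter this
  simp only [ne_eq, decide_not, Bool.not_eq_true', decide_eq_false_iff_not] at h2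
  omega

lemma gpStep_sorted (l : List ℕ) (i : ℕ) : (gpStep l i).Pairwise (· ≥ ·) :=
  List.pairwise_insertionSort _ _

lemma length_le_sum (l : List ℕ) (hpos : ∀ x ∈ l, 0 < x) : l.length ≤ l.sum := by
  induction l with
  | nil => simp
  | cons x xs ih =>
    simp only [List.length_cons, List.sum_cons]
    have h1 : 0 < x := hpos _ (by simp)
    have := ih (fun y hy => hpos y (by simp [hy]))
    omega

lemma filter_eq_self_of_pos (l : List ℕ) (hpos : ∀ x ∈ l, 0 < x) :
    l.filter (fun x => x ≠ 0) = l := by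
  rw [List.filter_eq_self]
  intro x hx
  simpa using Nat.pos_iff_ne_zero.mp (hpos x hx)

lemma filter_set_zero_length (l : List ℕ) (i : ℕ) (h : i < l.length)
    (hpos : ∀ x ∈ l, 0 < x) :
    ((l.set i 0).filter (fun x => x ≠ 0)).length + 1 = l.length := by
  induction l generalizing i with
  | nil => simp at h
  | cons x xs ih =>
    cases i with
    | zero =>
      simp only [List.set]
      have hxs := filter_eq_self_of_pos xs (fun y hy => hpos y (by simp [hy]))
      rw [List.filter_cons]
      simp only [ne_eq, decide_not] at hxs ⊢
      simp [hxs]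
    | succ i =>
      simp only [List.set]
      rw [List.filter_cons]
      have hx : 0 < x := hpos _ (by simp)
      simp only [ne_eq, decide_not]
      have hc : (!decide (x = 0)) = true := by simp; omega
      rw [if_pos hc]
      have := ih i (by simpa using h) (fun y hy => hpos y (by simp [hy]))
      simp only [ne_eq, decide_not] at this
      simp only [List.length_cons]
      omega

lemma gpStep_length_of_one (l : List ℕ) (i : ℕ) (h : i < l.length)
    (hpos : ∀ x ∈ l, 0 < x) (h1 : l.getD i 0 = 1) :
    (gpStep l i).length + 1 = l.length := by
  unfold gpStep
  rw [List.length_insertionSort, h1]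
  simpa using filter_set_zero_length l i h hpos

lemma gpStep_length_of_ge_two (l : List ℕ) (i : ℕ) (h : i < l.length)
    (hpos : ∀ x ∈ l, 0 < x) (h2 : 2 ≤ l.getD i 0) :
    (gpStep l i).length = l.length := by
  unfold gpStep
  rw [List.length_insertionSort]
  rw [filter_eq_self_of_pos]
  · simp
  · intro x hx
    rcases List.mem_or_eq_of_mem_set hx with h' | h'
    · exact hpos x h'
    · omega

lemma sorted_replicate_ge (m : ℕ) : (List.replicate m 1).Pairwise (· ≥ · : ℕ → ℕ → Prop) := by
  apply List.pairwise_replicate.mpr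
  simp

lemma eq_replicate_of_head_one (l : List ℕ) (hs : l.Pairwise (· ≥ ·))
    (hpos : ∀ x ∈ l, 0 < x) (h1 : l.getD 0 0 = 1) :
    l = List.replicate l.length 1 := by
  apply List.eq_replicate_of_mem
  intro x hx
  cases l with
  | nil => simp at hx
  | cons y ys =>
    simp only [List.getD_cons_zero] at h1
    have := hpos x hx
    rcases List.mem_cons.mp hx with h' | h'
    · omega
    · have := (List.pairwise_cons.mp hs).1 x h'
      omega

lemma gpStep_replicate (m e : ℕ) (he : e < m + 1) :
    gpStep (List.replicate (m + 1) 1) e = List.replicate m 1 := by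
  unfold gpStep
  have hg : (List.replicate (m+1) 1).getD e 0 = 1 := by
    rw [List.getD_eq_getElem _ _ (by simpa using he)]
    simp
  have hset : ∀ x ∈ ((List.replicate (m+1) 1).set e ((List.replicate (m+1) 1).getD e 0 - 1)).filter (fun x => x ≠ 0), x = 1 := by
    intro x hx
    have h2 := List.of_mem_filter hx
    have h3 := List.mem_filter.mp hx |>.1
    rcases List.mem_or_eq_of_mem_set h3 with h' | h'
    · exact List.eq_of_mem_replicate h'
    · simp only [ne_eq, decide_not, Bool.not_eq_true', decide_eq_false_iff_not] at h2
      rw [hg] at h'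
      omega
  have hlen : (((List.replicate (m+1) 1).set e ((List.replicate (m+1) 1).getD e 0 - 1)).filter (fun x => x ≠ 0)).length = m := by
    rw [hg]
    have := filter_set_zero_length (List.replicate (m+1) 1) e (by simpa using he)
      (by intro x hx; have := List.eq_of_mem_replicate hx; omega)
    simp only [List.length_replicate] at this
    simpa using this
  have : ((List.replicate (m+1) 1).set e ((List.replicate (m+1) 1).getD e 0 - 1)).filter (fun x => x ≠ 0) = List.replicate m 1 := by
    have h4 := List.eq_replicate_of_mem hset
    rw [hlen] at h4
    exact h4
  rw [this]
  exact (sorted_replicate_ge m).insertionSort_eq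

lemma gpStep_isPartitionOf (m : ℕ) (l : List ℕ) (e : ℕ)
    (hp : IsPartitionOf (m + 1) l) (he : e < l.length) :
    IsPartitionOf m (gpStep l e) := by
  obtain ⟨hs, hpos, hsum⟩ := hp
  refine ⟨gpStep_sorted l e, gpStep_pos l e, ?_⟩
  have := gpStep_sum l e he hpos
  omega



lemma prod_X_pow (s : Finset ℕ) (a : ℕ → ℕ) :
    (∏ j ∈ s, (X j : MvPolynomial ℕ ℚ) ^ a j)
      = monomial (∑ j ∈ s, Finsupp.single j (a j)) 1 := by
  induction s using Finset.induction_on with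
  | empty => simp [monomial_zero']
  | insert j s hj ih =>
    rw [Finset.prod_insert hj, Finset.sum_insert hj, ih, X_pow_eq_monomial, monomial_mul, one_mul]

lemma sum_single_apply (s : Finset ℕ) (a : ℕ → ℕ) (k : ℕ) :
    (∑ j ∈ s, Finsupp.single j (a j)) k = if k ∈ s then a k else 0 := by
  rw [Finset.sum_apply']
  rw [Finset.sum_congr rfl (fun j _ => Finsupp.single_apply)]
  simp [Finset.sum_ite_eq]

lemma totalDegree_prod_X_pow (s : Finset ℕ) (a : ℕ → ℕ) :
    (∏ j ∈ s, (X j : MvPolynomial ℕ ℚ) ^ a j).totalDegree = ∑ j ∈ s, a j := by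
  rw [prod_X_pow, totalDegree_monomial _ one_ne_zero]
  induction s using Finset.induction_on with
  | empty => simp
  | insert j s hj ih =>
    rw [Finset.sum_insert hj, Finset.sum_insert hj,
      Finsupp.sum_add_index' (fun _ => rfl) (fun _ _ _ => rfl), ih,
      Finsupp.sum_single_index rfl]

lemma prod_X_pow_inj (s : Finset ℕ) (a a' : ℕ → ℕ)
    (h : (∏ j ∈ s, (X j : MvPolynomial ℕ ℚ) ^ a j) = ∏ j ∈ s, (X j : MvPolynomial ℕ ℚ) ^ a' j) :
    ∀ j ∈ s, a j = a' j := by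
  intro j hj
  rw [prod_X_pow, prod_X_pow] at h
  have := monomial_left_injective (one_ne_zero (α := ℚ)) h
  have := DFunLike.congr_fun this j
  rwa [sum_single_apply, sum_single_apply, if_pos hj, if_pos hj] at this

lemma gpAux_mem_artin (m : ℕ) : ∀ (l : List ℕ), (∀ x ∈ l, 0 < x) → l.sum = m →
    ∀ p ∈ gpAux m l, ∃ a : ℕ → ℕ, (∀ j ∈ Finset.Icc 2 m, a j ≤ j - 1) ∧
      p = ∏ j ∈ Finset.Icc 2 m, X j ^ a j := by
  induction m with
  | zero =>
    intro l _ _ p hp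
    refine ⟨fun _ => 0, by simp, ?_⟩
    simp only [gpAux, Set.mem_singleton_iff] at hp
    simp [hp]
  | succ m ih =>
    intro l hpos hsum p hp
    simp only [gpAux, Set.mem_iUnion, Finset.mem_range, Set.mem_image] at hp
    obtain ⟨e, he, q, hq, hpq⟩ := hp
    have hlen : l.length ≤ m + 1 := hsum ▸ length_le_sum l hpos
    have hstep_sum : (gpStep l e).sum = m := by
      have := gpStep_sum l e he hpos; omega
    obtain ⟨a, ha, hq'⟩ := ih (gpStep l e) (gpStep_pos l e) hstep_sum q hq
    refine ⟨Function.update a (m+1) e, ?_, ?_⟩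
    · intro j hj
      simp only [Finset.mem_Icc] at hj
      rcases eq_or_ne j (m+1) with rfl | hne
      · simp only [Function.update_self]
        omega
      · rw [Function.update_of_ne hne]
        exact ha j (Finset.mem_Icc.mpr ⟨hj.1, by omega⟩)
    · rcases Nat.eq_zero_or_pos m with rfl | hm
      · have he0 : e = 0 := by omega
        have : Finset.Icc 2 1 = (∅ : Finset ℕ) := by decide
        rw [this, Finset.prod_empty, ← hpq, hq', he0]
        have : Finset.Icc 2 0 = (∅ : Finset ℕ) := by decide
        simp [this]
      · have hicc : Finset.Icc 2 (m+1) = insert (m+1) (Finset.Icc 2 m) := by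
          rw [← Finset.Ico_insert_right (by omega : 2 ≤ m+1), Finset.Ico_add_one_right_eq_Icc]
        rw [hicc, Finset.prod_insert (by simp), Function.update_self, ← hpq, hq']
        congr 1
        apply Finset.prod_congr rfl
        intro j hj
        rw [Function.update_of_ne]
        simp only [Finset.mem_Icc] at hj
        omega

lemma getD_pos (l : List ℕ) (e : ℕ) (he : e < l.length) (hpos : ∀ x ∈ l, 0 < x) :
    0 < l.getD e 0 := by
  rw [List.getD_eq_getElem l 0 he]
  exact hpos _ (l.getElem_mem he)

lemma icc_succ_insert (m : ℕ) (hm : 1 ≤ m) :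
    Finset.Icc 2 (m+1) = insert (m+1) (Finset.Icc 2 m) := by
  rw [← Finset.Ico_insert_right (by omega : 2 ≤ m+1), Finset.Ico_add_one_right_eq_Icc]

lemma artin_mem_gpAux (m : ℕ) : ∀ (l : List ℕ), IsPartitionOf m l → ∀ a : ℕ → ℕ,
    (∀ j ∈ Finset.Icc 2 m, a j ≤ j - 1) →
    ((∑ j ∈ Finset.Icc 2 m, a j) + 1 ≤ l.length ∨ l = List.replicate m 1) →
    (∏ j ∈ Finset.Icc 2 m, X j ^ a j) ∈ gpAux m l := by
  induction m with
  | zero =>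
    intro l _ a _ _
    have : Finset.Icc 2 0 = (∅ : Finset ℕ) := by decide
    rw [this, Finset.prod_empty]
    simp [gpAux]
  | succ m ih =>
    intro l hp a ha hor
    obtain ⟨hs, hpos, hsum⟩ := hp
    have hL1 : 1 ≤ l.length := by
      rcases l with _ | ⟨x, xs⟩
      · simp at hsum
      · simp
    have hLm : l.length ≤ m + 1 := hsum ▸ length_le_sum l hpos
    rcases Nat.eq_zero_or_pos m with rfl | hm
    · -- m + 1 = 1
      have hicc : Finset.Icc 2 1 = (∅ : Finset ℕ) := by decide
      rw [hicc, Finset.prod_empty]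
      simp only [gpAux, Set.mem_iUnion, Set.mem_image, Finset.mem_range]
      refine ⟨0, by omega, 1, ?_, by simp⟩
      simp [gpAux]
    · set e := a (m + 1) with he_def
      have hmem : m + 1 ∈ Finset.Icc 2 (m+1) := Finset.mem_Icc.mpr ⟨by omega, le_refl _⟩
      have he_le : e ≤ m := by
        have := ha (m+1) hmem
        omega
      have hsum_split : (∑ j ∈ Finset.Icc 2 (m+1), a j)
          = e + ∑ j ∈ Finset.Icc 2 m, a j := by
        rw [icc_succ_insert m hm, Finset.sum_insert (by simp)]
      have he_lt_sum : e ≤ ∑ j ∈ Finset.Icc 2 (m+1), a j := by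
        rw [hsum_split]; omega
      have he : e < l.length := by
        rcases hor with h | h
        · omega
        · rw [h, List.length_replicate]; omega
      have hstep : IsPartitionOf m (gpStep l e) :=
        gpStep_isPartitionOf m l e ⟨hs, hpos, hsum⟩ he
      have hq : (∏ j ∈ Finset.Icc 2 m, X j ^ a j) ∈ gpAux m (gpStep l e) := by
        apply ih (gpStep l e) hstep a
          (fun j hj => ha j (by simp only [Finset.mem_Icc] at hj ⊢; omega))
        rcases hor with hbd | hrep
        · -- bound case
          have hg1 : 0 < l.getD e 0 := getD_pos l e he hpos
          rcases Nat.lt_or_ge (l.getD e 0) 2 with hg | hg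
          · -- getD = 1
            have hg' : l.getD e 0 = 1 := by omega
            rcases Nat.eq_zero_or_pos e with he0 | he1
            · -- e = 0 : l is a column, use replicate branch
              right
              have hrepl := eq_replicate_of_head_one l hs hpos (he0 ▸ hg')
              have hsum' : l.sum = l.length := by
                conv_lhs => rw [hrepl]
                simp [List.sum_replicate]
              have hlen : l.length = m + 1 := by omega
              have hl2 : l = List.replicate (m+1) 1 := by rw [hrepl, hlen]
              rw [hl2]
              exact gpStep_replicate m e (by omega)
            · left
              have := gpStep_length_of_one l e he hpos hg'
              omega
          · left
            have := gpStep_length_of_ge_two l e he hpos hg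
            omega
        · -- replicate case
          right
          rw [hrep]
          rw [hrep, List.length_replicate] at he
          exact gpStep_replicate m e he
      simp only [gpAux, Set.mem_iUnion, Set.mem_image, Finset.mem_range]
      refine ⟨e, he, _, hq, ?_⟩
      rw [icc_succ_insert m hm, Finset.prod_insert (by simp)]

section Perms
variable {n : ℕ}

def invN (w : Equiv.Perm (Fin n)) : ℕ :=
  (Finset.univ.filter (fun q : Fin n × Fin n => q.1 < q.2 ∧ w q.2 < w q.1)).card

def codeF (w : Equiv.Perm (Fin n)) (j : Fin n) : ℕ :=
  (Finset.univ.filter (fun i : Fin n => j < i ∧ w i < w j)).card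

lemma sum_codeF (w : Equiv.Perm (Fin n)) : ∑ j : Fin n, codeF w j = invN w := by
  rw [invN, Finset.card_eq_sum_card_fiberwise
    (f := Prod.fst) (t := Finset.univ) (fun x _ => Finset.mem_univ _)]
  apply Finset.sum_congr rfl
  intro j _
  rw [codeF]
  apply Finset.card_bij (fun i _ => ((j, i) : Fin n × Fin n))
  · intro i hi
    simp only [Finset.mem_filter, Finset.mem_univ, true_and] at hi ⊢
    exact ⟨⟨hi.1, hi.2⟩, trivial⟩
  · intro i _ i' _ h
    exact congrArg Prod.snd h
  · intro q hq
    simp only [Finset.mem_filter, Finset.mem_univ, true_and] at hq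
    refine ⟨q.2, ?_, ?_⟩
    · simp only [Finset.mem_filter, Finset.mem_univ, true_and]
      rw [← hq.2]
      exact hq.1
    · rw [← hq.2]

lemma codeF_le (w : Equiv.Perm (Fin n)) (j : Fin n) : codeF w j ≤ n - 1 - j.val := by
  rw [← Fin.card_Ioi j]
  apply Finset.card_le_card
  intro i hi
  simp only [Finset.mem_filter, Finset.mem_univ, true_and] at hi
  exact Finset.mem_Ioi.mpr hi.1

lemma codeF_eq_rank (w : Equiv.Perm (Fin n)) (j : Fin n) :
    codeF w j = ((Finset.univ \ (Finset.univ.filter (fun i : Fin n => i < j)).image w).filter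
      (fun y => y < w j)).card := by
  rw [codeF]
  apply Finset.card_bij (fun i _ => w i)
  · intro i hi
    simp only [Finset.mem_filter, Finset.mem_univ, true_and] at hi
    simp only [Finset.mem_filter, Finset.mem_sdiff, Finset.mem_univ, true_and,
      Finset.mem_image, not_exists, not_and]
    refine ⟨fun x hx hwx => ?_, hi.2⟩
    have := w.injective hwx
    subst this
    exact absurd hx (not_lt.mpr (le_of_lt hi.1))
  · intro i _ i' _ h
    exact w.injective h
  · intro y hy
    simp only [Finset.mem_filter, Finset.mem_sdiff, Finset.mem_univ, true_and,
      Finset.mem_image, not_exists, not_and] at hy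
    refine ⟨w.symm y, ?_, by simp⟩
    simp only [Finset.mem_filter, Finset.mem_univ, true_and]
    constructor
    · rcases lt_trichotomy j (w.symm y) with hlt | heq | hlt
      · exact hlt
      · exfalso
        have hwj : w j = y := by rw [heq, Equiv.apply_symm_apply]
        rw [hwj] at hy
        exact absurd hy.2 (lt_irrefl y)
      · exfalso
        exact hy.1 (w.symm y) hlt (by simp)
    · simpa using hy.2

lemma rank_inj (Q : Finset (Fin n)) (x x' : Fin n) (hx : x ∉ Q) (hx' : x' ∉ Q)
    (h : ((Finset.univ \ Q).filter (fun y => y < x)).card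
       = ((Finset.univ \ Q).filter (fun y => y < x')).card) : x = x' := by
  rcases lt_trichotomy x x' with hlt | he | hlt
  · exfalso
    have hss : ((Finset.univ \ Q).filter (fun y => y < x))
        ⊂ ((Finset.univ \ Q).filter (fun y => y < x')) := by
      constructor
      · intro y hy
        simp only [Finset.mem_filter] at hy ⊢
        exact ⟨hy.1, lt_trans hy.2 hlt⟩
      · intro hsub
        have hxm : x ∈ (Finset.univ \ Q).filter (fun y => y < x') := by
          simp [hx, hlt]
        have := hsub hxm
        simp at this
    exact absurd h (Nat.ne_of_lt (Finset.card_lt_card hss))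
  · exact he
  · exfalso
    have hss : ((Finset.univ \ Q).filter (fun y => y < x'))
        ⊂ ((Finset.univ \ Q).filter (fun y => y < x)) := by
      constructor
      · intro y hy
        simp only [Finset.mem_filter] at hy ⊢
        exact ⟨hy.1, lt_trans hy.2 hlt⟩
      · intro hsub
        have hxm : x' ∈ (Finset.univ \ Q).filter (fun y => y < x) := by
          simp [hx', hlt]
        have := hsub hxm
        simp at this
    exact absurd h.symm (Nat.ne_of_lt (Finset.card_lt_card hss))

lemma codeF_injective : Function.Injective (codeF (n := n)) := by
  intro w w' h
  have key : ∀ m : ℕ, ∀ j : Fin n, j.val = m → w j = w' j := by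
    intro m
    induction m using Nat.strong_induction_on with
    | _ m ih =>
      intro j hj
      have hQ : (Finset.univ.filter (fun i : Fin n => i < j)).image w
          = (Finset.univ.filter (fun i : Fin n => i < j)).image w' := by
        apply Finset.image_congr
        intro i hi
        simp only [Finset.coe_filter, Finset.mem_univ, true_and, Set.mem_setOf_eq] at hi
        have hiv : i.val < j.val := hi
        exact ih i.val (by omega) i rfl
      have h1 := codeF_eq_rank w j
      have h2 := codeF_eq_rank w' j
      rw [congrFun h j, h2, ← hQ] at h1
      have hnx : w j ∉ (Finset.univ.filter (fun i : Fin n => i < j)).image w := by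
        simp only [Finset.mem_image, not_exists, not_and]
        intro x hx hwx
        simp only [Finset.mem_filter, Finset.mem_univ, true_and] at hx
        have := w.injective hwx
        subst this
        exact absurd hx (lt_irrefl _)
      have hnx' : w' j ∉ (Finset.univ.filter (fun i : Fin n => i < j)).image w := by
        rw [hQ]
        simp only [Finset.mem_image, not_exists, not_and]
        intro x hx hwx
        simp only [Finset.mem_filter, Finset.mem_univ, true_and] at hx
        have := w'.injective hwx
        subst this
        exact absurd hx (lt_irrefl _)
      exact (rank_inj _ (w' j) (w j) hnx' hnx h1).symm
  exact Equiv.ext (fun j => key j.val j rfl)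

end Perms

section Perms2
variable {n : ℕ}

noncomputable def codePi (w : Equiv.Perm (Fin n)) : ∀ j : Fin n, Fin (n - j.val) :=
  fun j => ⟨codeF w j, by have := codeF_le w j; have := j.isLt; omega⟩

lemma prod_card : ∏ j : Fin n, (n - j.val) = n.factorial := by
  rw [Fin.prod_univ_eq_prod_range (fun j => n - j) n]
  rw [← Finset.prod_range_reflect]
  exact (Finset.prod_congr rfl fun j hj => by
    rw [Finset.mem_range] at hj; omega).trans (Finset.prod_range_add_one_eq_factorial n)

lemma codePi_bijective : Function.Bijective (codePi (n := n)) := by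
  rw [Fintype.bijective_iff_injective_and_card]
  constructor
  · intro w w' h
    apply codeF_injective
    funext j
    have := congrFun h j
    exact congrArg Fin.val this
  · rw [Fintype.card_perm, Fintype.card_pi]
    simp only [Fintype.card_fin]
    rw [prod_card]

lemma card_inv_eq_card_code (i : ℕ) :
    Fintype.card {w : Equiv.Perm (Fin n) // invN w = i}
      = Fintype.card {d : ∀ j : Fin n, Fin (n - j.val) // ∑ j, (d j : ℕ) = i} := by
  apply Fintype.card_congr
  refine Equiv.subtypeEquiv (Equiv.ofBijective _ codePi_bijective) (fun w => ?_)
  rw [← sum_codeF w]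
  constructor <;> intro h <;> rw [← h] <;> rfl

end Perms2

lemma sum_Icc_reindex (n : ℕ) (hn : 1 ≤ n) (g : ℕ → ℕ) (h0 : g (n-1) = 0) :
    ∑ j ∈ Finset.Icc 2 n, g (n - j) = ∑ m ∈ Finset.range n, g m := by
  have h1 : ∑ j ∈ Finset.Icc 2 n, g (n - j) = ∑ m ∈ Finset.range (n-1), g m := by
    apply Finset.sum_nbij' (i := fun j => n - j) (j := fun m => n - m)
    · intro j hj
      simp only [Finset.mem_Icc] at hj
      simp only [Finset.mem_range]
      omega
    · intro m hm
      simp only [Finset.mem_range] at hm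
      simp only [Finset.mem_Icc]
      omega
    · intro j hj
      simp only [Finset.mem_Icc] at hj
      omega
    · intro m hm
      simp only [Finset.mem_range] at hm
      omega
    · intro j _
      rfl
  rw [h1]
  have : n = (n - 1) + 1 := by omega
  rw [this, Finset.sum_range_succ]
  simp only [Nat.add_sub_cancel]
  rw [h0]
  omega

def artinSet (n i : ℕ) : Set (MvPolynomial ℕ ℚ) :=
  {p | ∃ a : ℕ → ℕ, (∀ j ∈ Finset.Icc 2 n, a j ≤ j - 1) ∧
    (∑ j ∈ Finset.Icc 2 n, a j) = i ∧ p = ∏ j ∈ Finset.Icc 2 n, X j ^ a j}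

noncomputable def dval {n : ℕ} (d : ∀ j : Fin n, Fin (n - j.val)) (m : ℕ) : ℕ :=
  if h : m < n then (d ⟨m, h⟩).val else 0

noncomputable def phiMap {n : ℕ} (d : ∀ j : Fin n, Fin (n - j.val)) : MvPolynomial ℕ ℚ :=
  ∏ j ∈ Finset.Icc 2 n, X j ^ (dval d (n - j))

lemma dval_last {n : ℕ} (hn : 1 ≤ n) (d : ∀ j : Fin n, Fin (n - j.val)) :
    dval d (n - 1) = 0 := by
  rw [dval, dif_pos (by omega)]
  have h2 : ((d ⟨n-1, by omega⟩ : Fin (n - (n-1))) : ℕ) < n - (n-1) := (d ⟨n-1, by omega⟩).isLt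
  omega

lemma dval_reindex_sum {n : ℕ} (hn : 1 ≤ n) (d : ∀ j : Fin n, Fin (n - j.val)) :
    ∑ j ∈ Finset.Icc 2 n, dval d (n - j) = ∑ j : Fin n, (d j : ℕ) := by
  rw [sum_Icc_reindex n hn (dval d) (dval_last hn d)]
  rw [← Fin.sum_univ_eq_sum_range (dval d) n]
  apply Finset.sum_congr rfl
  intro j _
  rw [dval, dif_pos j.isLt]

lemma dval_bound {n : ℕ} (d : ∀ j : Fin n, Fin (n - j.val)) (j : ℕ)
    (hj : j ∈ Finset.Icc 2 n) : dval d (n - j) ≤ j - 1 := by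
  simp only [Finset.mem_Icc] at hj
  rw [dval, dif_pos (by omega)]
  have h2 : ((d ⟨n - j, by omega⟩ : Fin (n - (n - j))) : ℕ) < n - (n - j) :=
    (d ⟨n - j, by omega⟩).isLt
  omega

lemma ncard_artinSet (n i : ℕ) (hn : 1 ≤ n) :
    (artinSet n i).ncard
      = Fintype.card {d : ∀ j : Fin n, Fin (n - j.val) // ∑ j, (d j : ℕ) = i} := by
  classical
  set f : {d : ∀ j : Fin n, Fin (n - j.val) // ∑ j, (d j : ℕ) = i} → MvPolynomial ℕ ℚ :=
    fun d => phiMap d.val with hf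
  have hinj : Function.Injective f := by
    intro d d' h
    have hext := prod_X_pow_inj (Finset.Icc 2 n) _ _ h
    apply Subtype.ext
    funext k
    apply Fin.ext
    rcases Nat.lt_or_ge (k.val + 2) (n + 1) with hk | hk
    · -- k.val ≤ n - 2
      have hjm : n - k.val ∈ Finset.Icc 2 n := by
        simp only [Finset.mem_Icc]; omega
      have := hext (n - k.val) hjm
      have hnn : n - (n - k.val) = k.val := by have := k.isLt; omega
      rw [dval, dval, hnn, dif_pos k.isLt] at this
      simpa using this
    · -- k.val = n - 1
      have h1 := (d.val k).isLt
      have h2 := (d'.val k).isLt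
      have := k.isLt
      omega
  have hrange : artinSet n i = Set.range f := by
    ext p
    constructor
    · rintro ⟨a, ha, hsum, rfl⟩
      have hd : ∀ j : Fin n, (if h : 2 ≤ n - j.val then a (n - j.val) else 0) < n - j.val := by
        intro j
        split_ifs with h
        · have := ha (n - j.val) (by simp only [Finset.mem_Icc]; omega)
          omega
        · have := j.isLt; omega
      set d : ∀ j : Fin n, Fin (n - j.val) :=
        fun j => ⟨if h : 2 ≤ n - j.val then a (n - j.val) else 0, hd j⟩ with hd_def
      have key : ∀ j ∈ Finset.Icc 2 n, dval d (n - j) = a j := by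
        intro j hj
        simp only [Finset.mem_Icc] at hj
        rw [dval, dif_pos (by omega)]
        show (if h : 2 ≤ n - (n - j) then a (n - (n - j)) else 0) = a j
        have hnn : n - (n - j) = j := by omega
        rw [hnn, dif_pos hj.1]
      have hdsum : ∑ j : Fin n, (d j : ℕ) = i := by
        rw [← dval_reindex_sum hn d, ← hsum]
        exact Finset.sum_congr rfl key
      refine ⟨⟨d, hdsum⟩, ?_⟩
      rw [hf]
      show phiMap d = _
      rw [phiMap]
      exact Finset.prod_congr rfl (fun j hj => by rw [key j hj])
    · rintro ⟨d, rfl⟩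
      refine ⟨fun j => dval d.val (n - j), fun j hj => dval_bound d.val j hj, ?_, ?_⟩
      · rw [dval_reindex_sum hn d.val]
        exact d.prop
      · rfl
  rw [hrange, ← Nat.card_coe_set_eq, Nat.card_range_of_injective hinj,
    Nat.card_eq_fintype_card]

lemma lt_length_iff_getD_pos (l : List ℕ) (hpos : ∀ x ∈ l, 0 < x) (j : ℕ) :
    j < l.length ↔ 0 < l.getD j 0 := by
  constructor
  · exact fun h => getD_pos l j h hpos
  · intro h
    by_contra h'
    rw [List.getD_eq_default l 0 (by omega)] at h
    omega

/-- Let `{λ_n}` be a nested sequence of Young diagrams with `|λ_n| = n`, and suppose `λ_N`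
has at least `k+1` rows. Then for all `i ≤ k` and `n ≥ N`, the degree-`i` monomials of
`B(λ_n)` are exactly the degree-`i` monomials `x_2^{a_2} ⋯ x_n^{a_n}` with `0 ≤ a_j ≤ j-1`
(the degree-`i` part of `B(col_n)`); in particular their number equals the number of
permutations of `{1,...,n}` with exactly `i` inversions. -/
theorem stmt17 (lam : ℕ → List ℕ) (hpart : ∀ n : ℕ, 1 ≤ n → IsPartitionOf n (lam n))
    (hnested : ∀ n j : ℕ, (lam n).getD j 0 ≤ (lam (n + 1)).getD j 0)
    (k N : ℕ) (hN : 1 ≤ N) (hrows : k + 1 ≤ (lam N).length) :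
    ∀ i : ℕ, i ≤ k → ∀ n : ℕ, N ≤ n →
      ({p ∈ gpBasis (lam n) | p.totalDegree = i} =
        {p : MvPolynomial ℕ ℚ | ∃ a : ℕ → ℕ,
          (∀ j ∈ Finset.Icc 2 n, a j ≤ j - 1) ∧ (∑ j ∈ Finset.Icc 2 n, a j) = i ∧
          p = ∏ j ∈ Finset.Icc 2 n, X j ^ a j}) ∧
      Set.ncard {p ∈ gpBasis (lam n) | p.totalDegree = i} =
        Fintype.card {w : Equiv.Perm (Fin n) //
          (Finset.univ.filter (fun q : Fin n × Fin n => q.1 < q.2 ∧ w q.2 < w q.1)).card = i} := by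
  have hlen : ∀ m, N ≤ m → k + 1 ≤ (lam m).length := by
    intro m hm
    induction m, hm using Nat.le_induction with
    | base => exact hrows
    | succ m hm ih =>
      have hm1 : 1 ≤ m := le_trans hN hm
      obtain ⟨_, hposm, _⟩ := hpart m hm1
      obtain ⟨_, hposm1, _⟩ := hpart (m+1) (by omega)
      have hk : k < (lam m).length := ih
      have h1 : 0 < (lam m).getD k 0 := (lt_length_iff_getD_pos _ hposm k).mp hk
      have h2 : 0 < (lam (m+1)).getD k 0 := lt_of_lt_of_le h1 (hnested m k)
      exact (lt_length_iff_getD_pos _ hposm1 k).mpr h2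
  intro i hik n hn
  have hn1 : 1 ≤ n := le_trans hN hn
  obtain ⟨hs, hpos, hsum⟩ := hpart n hn1
  have hset : {p ∈ gpBasis (lam n) | p.totalDegree = i} =
      {p : MvPolynomial ℕ ℚ | ∃ a : ℕ → ℕ,
        (∀ j ∈ Finset.Icc 2 n, a j ≤ j - 1) ∧ (∑ j ∈ Finset.Icc 2 n, a j) = i ∧
        p = ∏ j ∈ Finset.Icc 2 n, X j ^ a j} := by
    ext p
    constructor
    · rintro ⟨hp, hdeg⟩
      have hp' : p ∈ gpAux n (lam n) := by
        rw [gpBasis, hsum] at hp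
        exact hp
      obtain ⟨a, ha, rfl⟩ := gpAux_mem_artin n (lam n) hpos hsum p hp'
      refine ⟨a, ha, ?_, rfl⟩
      rw [← totalDegree_prod_X_pow]
      exact hdeg
    · rintro ⟨a, ha, hsa, rfl⟩
      constructor
      · rw [gpBasis, hsum]
        apply artin_mem_gpAux n (lam n) ⟨hs, hpos, hsum⟩ a ha
        left
        rw [hsa]
        exact le_trans (by omega) (le_trans (hlen n hn) (le_refl _))
      · rw [totalDegree_prod_X_pow]
        exact hsa
  refine ⟨hset, ?_⟩
  rw [hset]
  have h1 : {p : MvPolynomial ℕ ℚ | ∃ a : ℕ → ℕ,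
      (∀ j ∈ Finset.Icc 2 n, a j ≤ j - 1) ∧ (∑ j ∈ Finset.Icc 2 n, a j) = i ∧
      p = ∏ j ∈ Finset.Icc 2 n, X j ^ a j} = artinSet n i := rfl
  rw [h1, ncard_artinSet n i hn1, ← card_inv_eq_card_code i]
  apply Fintype.card_congr
  exact Equiv.subtypeEquivRight (fun w => Iff.rfl)
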